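/- The combinatorial identity: for every n ≥ 1, ∑_{k=2}^{n} 2^{n−k} · C(n−1, k−1) · (2^k + 2·(−1)^k)/3 = 2·(4^{n−1} − 1)/3. -/

import Mathlib

lemma dvd3 (k : ℕ) : (3:ℤ) ∣ 2^k + 2*(-1)^k := by
  induction k with
  | zero => norm_num
  | succ k ih =>
    obtain ⟨c, hc⟩ := ih
    exact ⟨2*c - 2*(-1)^k, by rw [pow_succ, pow_succ]; linear_combination 2 * hc⟩

lemma sum_lemma (m : ℕ) :
    ∑ j ∈ Finset.range (m+1),
      (2:ℤ)^(m-j) * (m.choose j) * (2^(j+1) + 2*(-1)^(j+1)) = 2*4^m - 2 := by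
  have h1 : ∀ j ∈ Finset.range (m+1),
      (2:ℤ)^(m-j) * (m.choose j) * (2^(j+1) + 2*(-1)^(j+1)) =
      2^m * 2 * (m.choose j) - 2 * ((-1)^j * 2^(m-j) * (m.choose j)) := by
    intro j hj
    have hjm : j ≤ m := Nat.lt_succ_iff.mp (Finset.mem_range.mp hj)
    have hp : (2:ℤ)^(m-j) * 2^j = 2^m := by
      rw [← pow_add, Nat.sub_add_cancel hjm]
    rw [pow_succ, pow_succ]
    linear_combination 2 * (m.choose j : ℤ) * hp
  rw [Finset.sum_congr rfl h1, Finset.sum_sub_distrib, ← Finset.mul_sum, ← Finset.mul_sum]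
  have h2 : ∑ j ∈ Finset.range (m+1), ((m.choose j : ℤ)) = 2^m := by
    exact_mod_cast Nat.sum_range_choose m
  have h3 : ∑ j ∈ Finset.range (m+1), ((-1:ℤ))^j * 2^(m-j) * (m.choose j) = 1 := by
    have := add_pow (-1 : ℤ) 2 m
    norm_num at this
    rw [← this]
  rw [h2, h3]
  ring_nf
  rw [show (4:ℤ) = 2^2 by norm_num, ← pow_mul]
  ring_nf

theorem stmt_1 (n : ℕ) (hn : 1 ≤ n) :
    ∑ k ∈ Finset.Icc 2 n,
      (2 : ℤ) ^ (n - k) * ((n - 1).choose (k - 1)) * ((2 ^ k + 2 * (-1) ^ k) / 3) =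
    2 * (4 ^ (n - 1) - 1) / 3 := by
  obtain ⟨m, rfl⟩ := Nat.exists_eq_add_of_le hn
  have key : (∑ k ∈ Finset.Icc 2 (1+m),
      (2 : ℤ) ^ (1+m - k) * (((1+m) - 1).choose (k - 1)) * ((2 ^ k + 2 * (-1) ^ k) / 3)) * 3
      = 2 * (4 ^ ((1+m) - 1) - 1) := by
    rw [Finset.sum_mul]
    have hterm : ∀ k ∈ Finset.Icc 2 (1+m),
        (2:ℤ) ^ (1+m - k) * (((1+m) - 1).choose (k - 1)) * ((2 ^ k + 2 * (-1) ^ k) / 3) * 3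
        = (2:ℤ) ^ (m - (k-1)) * ((m).choose (k - 1)) * (2 ^ k + 2 * (-1) ^ k) := by
      intro k hk
      obtain ⟨h2k, hkm⟩ := Finset.mem_Icc.mp hk
      have e1 : 1 + m - k = m - (k-1) := by omega
      have e2 : 1 + m - 1 = m := by omega
      rw [mul_assoc, Int.ediv_mul_cancel (dvd3 k), e1, e2]
    rw [Finset.sum_congr rfl hterm]
    have hmap : Finset.Icc 2 (1+m) = (Finset.Icc 1 m).map (addRightEmbedding 1) := by
      rw [Finset.map_add_right_Icc]
      congr 1 <;> omega
    rw [hmap, Finset.sum_map]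
    simp only [addRightEmbedding_apply, Nat.add_sub_cancel]
    have hins : Finset.range (m+1) = insert 0 (Finset.Icc 1 m) := by
      ext x; simp [Finset.mem_range, Finset.mem_Icc]; omega
    have := sum_lemma m
    rw [hins, Finset.sum_insert (by simp)] at this
    norm_num at this
    rw [show 1 + m - 1 = m by omega]
    have heq : ∀ j ∈ Finset.Icc 1 m,
        (2:ℤ) ^ (m - j) * ((m).choose j) * (2 ^ (j+1) + 2 * (-1) ^ (j+1))
        = (2:ℤ) ^ (m - j) * ((m).choose j) * (2 ^ (j + 1) + 2 * (-1) ^ (j + 1)) := fun _ _ => rfl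
    rw [show (2:ℤ) * (4 ^ m - 1) = 2 * 4 ^ m - 2 by ring, ← this]
  rw [← key, Int.mul_ediv_cancel _ (by norm_num)]
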